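/- In the security game with n ≥ 2 players and penalty P > 0, the mixed-strategy profile where every player draws her level from the c.d.f. F(s) = 1 − (1 − s/P)^{1/(n−1)} on [0,P] is an ε-equilibrium for ε = P/4: no player can increase her expected utility by more than P/4 by switching to any pure strategy s ∈ [0,P]. -/

import Mathlib

open MeasureTheory

/-- The c.d.f. `F(s) = 1 - (1 - s/P)^{1/(n-1)}` on `[0,P)`, `0` below `0`
and `1` above `P`. -/
noncomputable def secF (n : ℕ) (P : ℝ) (s : ℝ) : ℝ :=
  if s ≤ 0 then 0
  else if s < P then 1 - (1 - s / P) ^ ((1:ℝ) / ((n:ℝ) - 1))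
  else 1

/-- Expected utility of a player choosing the deterministic level `s` against
`n - 1` opponents drawing i.i.d. levels with c.d.f. `secF`. -/
noncomputable def secEu (n : ℕ) (P : ℝ) (s : ℝ) : ℝ :=
  -P * (1 - secF n P s) ^ (n - 1) - s * (1 - (1 - secF n P s) ^ (n - 1))

lemma secF_measurable (n : ℕ) (P : ℝ) : Measurable (secF n P) := by
  unfold secF
  refine Measurable.ite measurableSet_Iic measurable_const
    (Measurable.ite measurableSet_Iio ?_ measurable_const)
  fun_prop

lemma secEu_measurable (n : ℕ) (P : ℝ) : Measurable (secEu n P) := by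
  have h := secF_measurable n P
  unfold secEu
  exact (measurable_const.mul ((measurable_const.sub h).pow_const _)).sub
    (measurable_id.mul (measurable_const.sub ((measurable_const.sub h).pow_const _)))

lemma secEu_eq (n : ℕ) (hn : 2 ≤ n) (P : ℝ) (hP : 0 < P) (s : ℝ)
    (hs : s ∈ Set.Icc (0:ℝ) P) : secEu n P s = -P + s * (1 - s / P) := by
  obtain ⟨hs0, hsP⟩ := hs
  rcases eq_or_lt_of_le hs0 with h0 | h0
  · simp [secEu, secF, ← h0]
  rcases eq_or_lt_of_le hsP with hPs | hPs
  · have h1 : 1 ≤ n - 1 := by omega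
    subst hPs
    simp [secEu, secF, not_le.2 h0, zero_pow (by omega : n - 1 ≠ 0), div_self hP.ne']
  · have hx : (0:ℝ) ≤ 1 - s / P := by
      have : s / P ≤ 1 := (div_le_one hP).2 hsP
      linarith
    have hne : (n:ℝ) - 1 ≠ 0 := by
      have : (2:ℝ) ≤ (n:ℝ) := by exact_mod_cast hn
      linarith
    have key : (1 - secF n P s) ^ (n - 1) = 1 - s / P := by
      rw [secF, if_neg (not_le.2 h0), if_pos hPs]
      have h2 : 1 - (1 - (1 - s/P) ^ ((1:ℝ)/((n:ℝ)-1)))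
          = (1 - s/P) ^ ((1:ℝ)/((n:ℝ)-1)) := by ring
      rw [h2, ← Real.rpow_natCast ((1 - s/P) ^ ((1:ℝ)/((n:ℝ)-1))) (n-1),
        ← Real.rpow_mul hx]
      have hn1 : ((n - 1 : ℕ) : ℝ) = (n:ℝ) - 1 := by
        have : 1 ≤ n := by omega
        push_cast [Nat.cast_sub this]
        ring
      rw [hn1, one_div, inv_mul_cancel₀ hne, Real.rpow_one]
    rw [secEu, key]
    field_simp
    ring

lemma secEu_le (n : ℕ) (hn : 2 ≤ n) (P : ℝ) (hP : 0 < P) (s : ℝ)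
    (hs : s ∈ Set.Icc (0:ℝ) P) : secEu n P s ≤ -(3 * P / 4) := by
  rw [secEu_eq n hn P hP s hs]
  obtain ⟨hs0, hsP⟩ := hs
  have h1 : s * (1 - s / P) = s * (P - s) / P := by field_simp
  have h2 : s * (P - s) / P ≤ P / 4 := by
    rw [div_le_div_iff₀ hP (by norm_num : (0:ℝ) < 4)]
    nlinarith [sq_nonneg (2 * s - P)]
  linarith [h1 ▸ h2]

lemma secEu_ge (n : ℕ) (hn : 2 ≤ n) (P : ℝ) (hP : 0 < P) (s : ℝ)
    (hs : s ∈ Set.Icc (0:ℝ) P) : -P ≤ secEu n P s := by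
  rw [secEu_eq n hn P hP s hs]
  obtain ⟨hs0, hsP⟩ := hs
  have hx : (0:ℝ) ≤ 1 - s / P := by
    have : s / P ≤ 1 := (div_le_one hP).2 hsP
    linarith
  nlinarith [mul_nonneg hs0 hx]

/-- The symmetric mixed profile in which every player draws her level from the
c.d.f. `F(s) = 1 - (1 - s/P)^{1/(n-1)}` is an `ε`-equilibrium for `ε = P/4`:
if `μ` is the player's own mixed strategy (a probability measure with c.d.f.
`secF`), then no deviation to a pure level `s' ∈ [0,P]` improves her expected
utility by more than `P/4`. -/
theorem security_mixed_epsilon_equilibrium (n : ℕ) (hn : 2 ≤ n) (P : ℝ) (hP : 0 < P)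
    (μ : Measure ℝ) [IsProbabilityMeasure μ]
    (hcdf : ∀ s : ℝ, μ (Set.Iic s) = ENNReal.ofReal (secF n P s)) :
    ∀ s' ∈ Set.Icc (0:ℝ) P, secEu n P s' - ∫ s, secEu n P s ∂μ ≤ P / 4 := by
  intro s' hs'
  have hupper := secEu_le n hn P hP s' hs'
  -- μ is supported on [0,P]
  have hlow : μ (Set.Iio 0) = 0 := by
    have h := hcdf 0
    rw [show secF n P 0 = 0 by simp [secF]] at h
    simp at h
    exact le_antisymm (le_trans (measure_mono Set.Iio_subset_Iic_self) h.le) zero_le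
  have hhigh : μ (Set.Ioi P) = 0 := by
    have h := hcdf P
    rw [show secF n P P = 1 by simp [secF, not_le.2 hP]] at h
    have : μ (Set.Iic P)ᶜ = 0 := by
      rw [measure_compl measurableSet_Iic (measure_ne_top μ _), h]
      simp
    rwa [Set.compl_Iic] at this
  have hsupp : ∀ᵐ s ∂μ, s ∈ Set.Icc (0:ℝ) P := by
    rw [ae_iff]
    have : {s : ℝ | ¬ s ∈ Set.Icc (0:ℝ) P} = Set.Iio 0 ∪ Set.Ioi P := by
      ext x
      simp only [Set.mem_setOf_eq, Set.mem_Icc, Set.mem_union, Set.mem_Iio, Set.mem_Ioi,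
        not_and_or, not_le]
    rw [this]
    exact le_antisymm (le_trans (measure_union_le _ _) (by rw [hlow, hhigh]; simp))
      zero_le
  have hge : ∀ᵐ s ∂μ, -P ≤ secEu n P s := hsupp.mono fun s hs => secEu_ge n hn P hP s hs
  have hbound : ∀ᵐ s ∂μ, ‖secEu n P s‖ ≤ P := hsupp.mono fun s hs => by
    have h1 := secEu_ge n hn P hP s hs
    have h2 := secEu_le n hn P hP s hs
    rw [Real.norm_eq_abs, abs_le]
    constructor <;> linarith
  have hint : Integrable (secEu n P) μ :=
    (integrable_const P).mono' (secEu_measurable n P).aestronglyMeasurable hbound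
  have hmono : -P ≤ ∫ s, secEu n P s ∂μ := by
    have : ∫ _, (-P : ℝ) ∂μ ≤ ∫ s, secEu n P s ∂μ :=
      integral_mono_ae (integrable_const _) hint hge
    simpa using this
  linarith
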